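/- Let α > 1 be a real number. For Lebesgue-almost all x ∈ (0,1], writing x = ⟨d_i⟩_α for its α-expansion, the frequency 𝔣_{d,α}(x) = lim_{n→∞} #{j ∈ {1,…,n} : d_j = d}/n exists and equals (α−1)/α^d for every positive integer d. -/

import Mathlib

open MeasureTheory Filter

noncomputable section AlphaDigits

variable (α : ℝ)

/-- The first digit of the α-expansion of `x`. -/
def adig (x : ℝ) : ℕ := (⌊-Real.logb α x⌋).toNat + 1

/-- The shift map on `(0,1]`. -/
def amap (x : ℝ) : ℝ := (x * α ^ adig α x - 1) / (α - 1)

/-- The cylinder interval for first digit `e`. -/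
def aSe (e : ℕ) : Set ℝ := Set.Ioc (α ^ (-(e : ℤ))) (α ^ (-(e : ℤ)) * α)

variable {α} (hα : 1 < α)

lemma adig_pos (x : ℝ) : 1 ≤ adig α x := Nat.le_add_left 1 _

include hα

lemma mem_aSe_adig {x : ℝ} (hx : x ∈ Set.Ioc (0:ℝ) 1) : x ∈ aSe α (adig α x) := by
  obtain ⟨hx0, hx1⟩ := hx
  have hα0 : (0:ℝ) < α := lt_trans zero_lt_one hα
  have hL : 0 ≤ -Real.logb α x := neg_nonneg.2 (Real.logb_nonpos hα hx0.le hx1)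
  set n : ℤ := ⌊-Real.logb α x⌋ with hn
  have hn0 : 0 ≤ n := Int.floor_nonneg.2 hL
  have hcast : ((adig α x : ℕ) : ℤ) = n + 1 := by
    simp only [adig]
    push_cast [Int.toNat_of_nonneg hn0]
    omega
  have hz : ∀ m : ℤ, α ^ m = α ^ (m : ℝ) := fun m => (Real.rpow_intCast α m).symm
  constructor
  · have h1 : (-(n + 1) : ℝ) < Real.logb α x := by
      have h2 := Int.lt_floor_add_one (-Real.logb α x)
      rw [← hn] at h2
      push_cast at h2 ⊢
      linarith
    have h3 := (Real.lt_logb_iff_rpow_lt hα hx0).1 h1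
    rw [hz, show ((-(adig α x : ℕ) : ℤ) : ℝ) = (-(n+1) : ℝ) by rw [Int.cast_neg, hcast]; push_cast; ring]
    exact h3
  · have h1 : Real.logb α x ≤ (-n : ℝ) := by
      have h2 := Int.floor_le (-Real.logb α x)
      rw [← hn] at h2
      linarith
    have h3 := (Real.logb_le_iff_le_rpow hα hx0).1 h1
    have h4 : α ^ ((-(adig α x : ℕ) : ℤ) : ℝ) * α = α ^ ((-n : ℤ) : ℝ) := by
      rw [← Real.rpow_add_one (ne_of_gt hα0)]
      congr 1
      rw [Int.cast_neg, hcast]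
      push_cast; ring
    rw [hz, h4]
    exact_mod_cast h3

lemma adig_eq_of_mem {x : ℝ} {e : ℕ} (he : 1 ≤ e) (hx : x ∈ aSe α e) : adig α x = e := by
  have hα0 : (0:ℝ) < α := lt_trans zero_lt_one hα
  have hx0 : 0 < x := lt_trans (zpow_pos hα0 _) hx.1
  have hz : ∀ m : ℤ, α ^ m = α ^ (m : ℝ) := fun m => (Real.rpow_intCast α m).symm
  have h1 : ((-(e : ℤ) : ℤ) : ℝ) < Real.logb α x := by
    rw [Real.lt_logb_iff_rpow_lt hα hx0, Real.rpow_intCast]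
    exact hx.1
  have h2 : Real.logb α x ≤ ((-(e : ℤ) + 1 : ℤ) : ℝ) := by
    rw [Real.logb_le_iff_le_rpow hα hx0, Real.rpow_intCast, zpow_add_one₀ (ne_of_gt hα0)]
    exact hx.2
  have hfl : ⌊-Real.logb α x⌋ = (e : ℤ) - 1 := by
    rw [Int.floor_eq_iff]
    constructor
    · push_cast at h2 ⊢; linarith
    · push_cast at h1 ⊢; linarith
  simp only [adig, hfl]
  omega

lemma aSe_subset {e : ℕ} (he : 1 ≤ e) : aSe α e ⊆ Set.Ioc (0:ℝ) 1 := by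
  intro x hx
  have hα0 : (0:ℝ) < α := lt_trans zero_lt_one hα
  refine ⟨lt_trans (zpow_pos hα0 _) hx.1, le_trans hx.2 ?_⟩
  rw [← zpow_add_one₀ (ne_of_gt hα0)]
  apply zpow_le_one_of_nonpos₀ hα.le
  omega


omit hα in
lemma measurable_adig : Measurable (adig α) := by
  have hm : Measurable fun x : ℝ => -Real.logb α x := by
    simp only [Real.logb]
    exact (Real.measurable_log.div_const _).neg
  exact ((Measurable.of_discrete (f := Int.toNat)).comp hm.floor).add measurable_const

omit hα in
lemma measurable_amap : Measurable (amap α) := by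
  apply Measurable.div_const
  apply Measurable.sub _ measurable_const
  exact measurable_id.mul
    ((Measurable.of_discrete (f := fun n : ℕ => α ^ n)).comp (measurable_adig (α := α)))

lemma amap_mem {x : ℝ} (hx : x ∈ Set.Ioc (0:ℝ) 1) : amap α x ∈ Set.Ioc (0:ℝ) 1 := by
  have hα0 : (0:ℝ) < α := lt_trans zero_lt_one hα
  obtain ⟨h1, h2⟩ := mem_aSe_adig hα hx
  have hc : (0:ℝ) < α ^ adig α x := pow_pos hα0 _
  have hinv : α ^ (-(adig α x : ℤ)) * α ^ adig α x = 1 := by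
    rw [← zpow_natCast α (adig α x), ← zpow_add₀ (ne_of_gt hα0)]
    simp
  simp only [amap, Set.mem_Ioc]
  constructor
  · apply div_pos _ (by linarith)
    nlinarith [mul_lt_mul_of_pos_right h1 hc]
  · rw [div_le_one (by linarith)]
    nlinarith [mul_le_mul_of_nonneg_right h2 hc.le]

lemma aSe_inter_preimage {e : ℕ} (he : 1 ≤ e) (A : Set ℝ) :
    aSe α e ∩ amap α ⁻¹' A
      = (fun x => (x * α ^ e - 1) / (α - 1)) ⁻¹' (Set.Ioc (0:ℝ) 1 ∩ A) := by
  have hα0 : (0:ℝ) < α := lt_trans zero_lt_one hα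
  have hc : (0:ℝ) < α ^ e := pow_pos hα0 _
  have hinv : α ^ (-(e : ℤ)) * α ^ e = 1 := by
    rw [← zpow_natCast α e, ← zpow_add₀ (ne_of_gt hα0)]
    simp
  ext x
  constructor
  · rintro ⟨hxe, hxA⟩
    have hde : adig α x = e := adig_eq_of_mem hα he hxe
    have hxI : x ∈ Set.Ioc (0:ℝ) 1 := aSe_subset hα he hxe
    have hgx : (x * α ^ e - 1) / (α - 1) = amap α x := by
      simp only [amap, hde]
    show (x * α ^ e - 1) / (α - 1) ∈ Set.Ioc (0:ℝ) 1 ∩ A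
    rw [hgx]
    exact ⟨amap_mem hα hxI, hxA⟩
  · intro hg
    have hg1 : (x * α ^ e - 1) / (α - 1) ∈ Set.Ioc (0:ℝ) 1 := hg.1
    have hgA : (x * α ^ e - 1) / (α - 1) ∈ A := hg.2
    simp only [Set.mem_Ioc] at hg1
    have h1 : 0 < (x * α ^ e - 1) / (α - 1) := hg1.1
    have h2 : (x * α ^ e - 1) / (α - 1) ≤ 1 := hg1.2
    have hb1 : 1 < x * α ^ e := by
      rcases (div_pos_iff).1 h1 with ⟨h, _⟩ | ⟨_, h⟩
      · linarith
      · linarith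
    have hb2 : x * α ^ e ≤ α := by
      rw [div_le_one (by linarith)] at h2
      linarith
    have hxe : x ∈ aSe α e := by
      constructor
      · nlinarith [mul_pos (zpow_pos hα0 (-(e:ℤ))) hc]
      · nlinarith [mul_pos (zpow_pos hα0 (-(e:ℤ))) hc]
    have hde : adig α x = e := adig_eq_of_mem hα he hxe
    refine ⟨hxe, ?_⟩
    show amap α x ∈ A
    simp only [amap, hde]
    exact hgA

omit hα in
lemma volume_affine_preimage {c d : ℝ} (hc : 0 < c) (hd : 0 < d) (B : Set ℝ) :
    volume ((fun x => (x * c - 1) / d) ⁻¹' B) = ENNReal.ofReal (d / c) * volume B := by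
  have h1 : (fun x : ℝ => (x * c - 1) / d) ⁻¹' B
      = (· * c) ⁻¹' ((· + (-1 : ℝ)) ⁻¹' ((· * d⁻¹) ⁻¹' B)) := by
    ext x
    simp [sub_eq_add_neg, div_eq_mul_inv]
  rw [h1, Real.volume_preimage_mul_right (ne_of_gt hc),
    measure_preimage_add_right volume (-1 : ℝ),
    Real.volume_preimage_mul_right (inv_ne_zero (ne_of_gt hd)), ← mul_assoc,
    ← ENNReal.ofReal_mul (abs_nonneg _), abs_of_pos (inv_pos.2 hc),
    inv_inv, abs_of_pos hd]
  ring_nf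

lemma meas_aSe {e : ℕ} (he : 1 ≤ e) :
    (volume.restrict (Set.Ioc (0:ℝ) 1)) (aSe α e)
      = ENNReal.ofReal ((α - 1) * α ^ (-(e : ℤ))) := by
  rw [Measure.restrict_apply' measurableSet_Ioc,
    Set.inter_eq_left.2 (aSe_subset hα he), aSe, Real.volume_Ioc]
  congr 1
  ring

lemma meas_aSe_amap {e : ℕ} (he : 1 ≤ e) (A : Set ℝ) :
    (volume.restrict (Set.Ioc (0:ℝ) 1)) (aSe α e ∩ amap α ⁻¹' A)
      = (volume.restrict (Set.Ioc (0:ℝ) 1)) (aSe α e)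
        * (volume.restrict (Set.Ioc (0:ℝ) 1)) A := by
  have hα0 : (0:ℝ) < α := lt_trans zero_lt_one hα
  have hsub : aSe α e ∩ amap α ⁻¹' A ⊆ Set.Ioc (0:ℝ) 1 :=
    Set.Subset.trans Set.inter_subset_left (aSe_subset hα he)
  rw [Measure.restrict_apply' measurableSet_Ioc, Set.inter_eq_left.2 hsub,
    aSe_inter_preimage hα he,
    volume_affine_preimage (pow_pos hα0 e) (sub_pos.2 hα),
    meas_aSe hα he, Measure.restrict_apply' measurableSet_Ioc, Set.inter_comm A]
  congr 2
  rw [zpow_neg, zpow_natCast, div_eq_mul_inv]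

lemma meas_digit_amap (s : Set ℕ) {B : Set ℝ} (hB : MeasurableSet B) :
    (volume.restrict (Set.Ioc (0:ℝ) 1)) (adig α ⁻¹' s ∩ amap α ⁻¹' B)
      = (volume.restrict (Set.Ioc (0:ℝ) 1)) (adig α ⁻¹' s)
        * (volume.restrict (Set.Ioc (0:ℝ) 1)) B := by
  classical
  set s' : Set ℕ := {e : ℕ | e ∈ s ∧ 1 ≤ e} with hs'
  have key : ∀ C : Set ℝ, MeasurableSet C →
      (volume.restrict (Set.Ioc (0:ℝ) 1)) (adig α ⁻¹' s ∩ C)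
        = ∑' e : s', (volume.restrict (Set.Ioc (0:ℝ) 1)) (aSe α (e : ℕ) ∩ C) := by
    intro C hC
    have hU : adig α ⁻¹' s ∩ C ∩ Set.Ioc (0:ℝ) 1
        = ⋃ e ∈ s', aSe α e ∩ C ∩ Set.Ioc (0:ℝ) 1 := by
      ext x
      simp only [Set.mem_iUnion, Set.mem_inter_iff, Set.mem_preimage, Set.mem_setOf_eq,
        exists_prop]
      constructor
      · rintro ⟨⟨hxs, hxC⟩, hxI⟩
        exact ⟨adig α x, ⟨hxs, adig_pos x⟩, ⟨mem_aSe_adig hα hxI, hxC⟩, hxI⟩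
      · rintro ⟨e, ⟨hes, he1⟩, ⟨hxe, hxC⟩, hxI⟩
        have hde : adig α x = e := adig_eq_of_mem hα he1 hxe
        exact ⟨⟨by rw [hde]; exact hes, hxC⟩, hxI⟩
    have hdisj : s'.PairwiseDisjoint (fun e => aSe α e ∩ C ∩ Set.Ioc (0:ℝ) 1) := by
      intro e hes f hfs hef
      refine Set.disjoint_left.2 ?_
      rintro x ⟨⟨hxe, -⟩, -⟩ ⟨⟨hxf, -⟩, -⟩
      exact hef ((adig_eq_of_mem hα hes.2 hxe).symm.trans (adig_eq_of_mem hα hfs.2 hxf))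
    have hmeas : ∀ e ∈ s', MeasurableSet (aSe α e ∩ C ∩ Set.Ioc (0:ℝ) 1) :=
      fun e _ => ((measurableSet_Ioc.inter hC).inter measurableSet_Ioc)
    rw [Measure.restrict_apply' measurableSet_Ioc, hU,
      measure_biUnion (Set.to_countable s') hdisj hmeas]
    refine tsum_congr fun e => ?_
    rw [Measure.restrict_apply' measurableSet_Ioc]
  rw [key _ (measurable_amap hB)]
  have h2 := key Set.univ MeasurableSet.univ
  simp only [Set.inter_univ] at h2
  rw [tsum_congr (fun e : s' => meas_aSe_amap hα e.2.2 B), ENNReal.tsum_mul_right, ← h2]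

end AlphaDigits


lemma isProbability_restrict : IsProbabilityMeasure (volume.restrict (Set.Ioc (0:ℝ) 1)) := by
  constructor
  rw [Measure.restrict_apply_univ, Real.volume_Ioc]
  norm_num

lemma measurePreserving_amap {α : ℝ} (hα : 1 < α) :
    MeasurePreserving (amap α) (volume.restrict (Set.Ioc (0:ℝ) 1))
      (volume.restrict (Set.Ioc (0:ℝ) 1)) := by
  refine ⟨measurable_amap, ?_⟩
  refine Measure.ext fun B hB => ?_
  rw [Measure.map_apply measurable_amap hB]
  have h := meas_digit_amap hα Set.univ hB
  simp only [Set.preimage_univ, Set.univ_inter] at h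
  rw [h, Measure.restrict_apply_univ, Real.volume_Ioc]
  norm_num

/-- The digit sequence of `x`. -/
noncomputable def adseq (α : ℝ) (j : ℕ) (x : ℝ) : ℕ := adig α ((amap α)^[j] x)

lemma measurable_adseq (α : ℝ) (j : ℕ) : Measurable (adseq α j) :=
  (measurable_adig (α := α)).comp ((measurable_amap (α := α)).iterate j)

lemma identDistrib_adseq {α : ℝ} (hα : 1 < α) (j : ℕ) :
    ProbabilityTheory.IdentDistrib (adseq α j) (adseq α 0)
      (volume.restrict (Set.Ioc (0:ℝ) 1)) (volume.restrict (Set.Ioc (0:ℝ) 1)) := by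
  refine ⟨(measurable_adseq α j).aemeasurable, (measurable_adseq α 0).aemeasurable, ?_⟩
  have h1 : adseq α j = adig α ∘ (amap α)^[j] := rfl
  have h2 : adseq α 0 = adig α := rfl
  rw [h1, h2, ← Measure.map_map (measurable_adig (α := α))
    ((measurable_amap (α := α)).iterate j), ((measurePreserving_amap hα).iterate j).map_eq]

lemma meas_adseq_preimage {α : ℝ} (hα : 1 < α) (j : ℕ) (s : Set ℕ) :
    (volume.restrict (Set.Ioc (0:ℝ) 1)) (adseq α j ⁻¹' s)
      = (volume.restrict (Set.Ioc (0:ℝ) 1)) (adig α ⁻¹' s) := by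
  have h1 : adseq α j ⁻¹' s = (amap α)^[j] ⁻¹' (adig α ⁻¹' s) := rfl
  rw [h1]
  exact ((measurePreserving_amap hα).iterate j).measure_preimage
    ((measurable_adig (α := α)) (MeasurableSet.of_discrete (s := s))).nullMeasurableSet

lemma indepFun_adseq {α : ℝ} (hα : 1 < α) {i j : ℕ} (hij : i ≠ j) :
    ProbabilityTheory.IndepFun (adseq α i) (adseq α j)
      (volume.restrict (Set.Ioc (0:ℝ) 1)) := by
  have key : ∀ i j : ℕ, i < j →
      ProbabilityTheory.IndepFun (adseq α i) (adseq α j)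
        (volume.restrict (Set.Ioc (0:ℝ) 1)) := by
    intro i j hlt
    rw [ProbabilityTheory.indepFun_iff_measure_inter_preimage_eq_mul]
    intro s t _ _
    have hiter : ∀ x : ℝ, (amap α)^[j] x = (amap α)^[j - i - 1] (amap α ((amap α)^[i] x)) := by
      intro x
      have hj : (j - i - 1) + (1 + i) = j := by omega
      conv_lhs => rw [← hj]
      rw [Function.iterate_add_apply, Function.iterate_add_apply, Function.iterate_one]
    have h1 : adseq α i ⁻¹' s ∩ adseq α j ⁻¹' t
        = (amap α)^[i] ⁻¹'
          (adig α ⁻¹' s ∩ amap α ⁻¹' ((amap α)^[j - i - 1] ⁻¹' (adig α ⁻¹' t))) := by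
      ext x
      simp only [Set.mem_inter_iff, Set.mem_preimage, adseq, hiter x]
    have hBmeas : MeasurableSet ((amap α)^[j - i - 1] ⁻¹' (adig α ⁻¹' t)) :=
      ((measurable_amap (α := α)).iterate _)
        ((measurable_adig (α := α)) (MeasurableSet.of_discrete (s := t)))
    rw [h1, ((measurePreserving_amap hα).iterate i).measure_preimage
        (((measurable_adig (α := α)) (MeasurableSet.of_discrete (s := s))).inter
          ((measurable_amap (α := α)) hBmeas)).nullMeasurableSet,
      meas_digit_amap hα s hBmeas, meas_adseq_preimage hα i s, meas_adseq_preimage hα j t]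
    congr 1
    exact ((measurePreserving_amap hα).iterate (j - i - 1)).measure_preimage
      ((measurable_adig (α := α)) (MeasurableSet.of_discrete (s := t))).nullMeasurableSet
  rcases hij.lt_or_gt with h | h
  · exact key i j h
  · exact (key j i h).symm

lemma meas_adig_singleton {α : ℝ} (hα : 1 < α) {e : ℕ} (he : 1 ≤ e) :
    (volume.restrict (Set.Ioc (0:ℝ) 1)) (adig α ⁻¹' {e})
      = ENNReal.ofReal ((α - 1) * α ^ (-(e : ℤ))) := by
  have hset : adig α ⁻¹' {e} ∩ Set.Ioc (0:ℝ) 1 = aSe α e := by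
    ext x
    constructor
    · rintro ⟨hx1, hx2⟩
      have hde : adig α x = e := hx1
      exact hde ▸ mem_aSe_adig hα hx2
    · intro hx
      exact ⟨adig_eq_of_mem hα he hx, aSe_subset hα he hx⟩
  rw [Measure.restrict_apply' measurableSet_Ioc, hset, aSe, Real.volume_Ioc]
  congr 1
  ring

/-- The α-expansion value ⟨d_i⟩_α = ∑_{i=1}^∞ (α-1)^{i-1} α^{-(d_1+⋯+d_i)},
with the digit sequence `d : ℕ → ℕ` indexed from 0 (so `d 0` is the first digit). -/
noncomputable def alphaExpansion (α : ℝ) (d : ℕ → ℕ) : ℝ :=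
  ∑' i : ℕ, (α - 1) ^ i * α ^ (-((∑ j ∈ Finset.range (i + 1), d j : ℕ) : ℤ))

section Expansion

variable {α : ℝ} {d : ℕ → ℕ}

lemma aexp_bound (hα : 1 < α) (hd : ∀ i, 1 ≤ d i) (i : ℕ) :
    (α - 1) ^ i * α ^ (-((∑ j ∈ Finset.range (i + 1), d j : ℕ) : ℤ))
      ≤ ((α - 1) / α) ^ i * α⁻¹ := by
  have hα0 : (0:ℝ) < α := lt_trans zero_lt_one hα
  have hs : ((i : ℤ) + 1) ≤ ((∑ j ∈ Finset.range (i + 1), d j : ℕ) : ℤ) := by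
    have h1 : i + 1 ≤ ∑ j ∈ Finset.range (i + 1), d j := by
      calc i + 1 = ∑ _j ∈ Finset.range (i + 1), 1 := by simp
        _ ≤ _ := Finset.sum_le_sum fun j _ => hd j
    exact_mod_cast h1
  have h2 : α ^ (-((∑ j ∈ Finset.range (i + 1), d j : ℕ) : ℤ)) ≤ α ^ (-((i:ℤ) + 1)) :=
    zpow_le_zpow_right₀ hα.le (by linarith)
  calc (α - 1) ^ i * α ^ (-((∑ j ∈ Finset.range (i + 1), d j : ℕ) : ℤ))
      ≤ (α - 1) ^ i * α ^ (-((i:ℤ) + 1)) :=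
        mul_le_mul_of_nonneg_left h2 (pow_nonneg (by linarith) i)
    _ = ((α - 1) / α) ^ i * α⁻¹ := by
        have h3 : α ^ (-((i:ℤ) + 1)) = (α ^ (i + 1))⁻¹ := by
          rw [← zpow_natCast α (i + 1), ← zpow_neg,
            show -(((i + 1 : ℕ)) : ℤ) = -((i:ℤ) + 1) by push_cast; ring]
        rw [h3, div_pow, pow_succ, mul_inv]
        ring

lemma summable_aexp (hα : 1 < α) (hd : ∀ i, 1 ≤ d i) :
    Summable fun i : ℕ =>
      (α - 1) ^ i * α ^ (-((∑ j ∈ Finset.range (i + 1), d j : ℕ) : ℤ)) := by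
  have hα0 : (0:ℝ) < α := lt_trans zero_lt_one hα
  have hr0 : (0:ℝ) ≤ (α - 1) / α := div_nonneg (by linarith) hα0.le
  have hr1 : (α - 1) / α < 1 := (div_lt_one hα0).2 (by linarith)
  refine Summable.of_nonneg_of_le (fun i => ?_) (aexp_bound hα hd)
    ((summable_geometric_of_lt_one hr0 hr1).mul_right α⁻¹)
  exact mul_nonneg (pow_nonneg (by linarith) i) (zpow_pos hα0 _).le

lemma aexp_mem (hα : 1 < α) (hd : ∀ i, 1 ≤ d i) :
    alphaExpansion α d ∈ Set.Ioc (0:ℝ) 1 := by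
  have hα0 : (0:ℝ) < α := lt_trans zero_lt_one hα
  have hsum := summable_aexp hα hd
  have hnn : ∀ i, 0 ≤ (α - 1) ^ i * α ^ (-((∑ j ∈ Finset.range (i + 1), d j : ℕ) : ℤ)) := by
    intro i
    have := zpow_pos hα0 (-((∑ j ∈ Finset.range (i + 1), d j : ℕ) : ℤ))
    have : (0:ℝ) ≤ (α - 1) ^ i := pow_nonneg (by linarith) i
    positivity
  constructor
  · have h0 : (α - 1) ^ 0 * α ^ (-((∑ j ∈ Finset.range (0 + 1), d j : ℕ) : ℤ))
        ≤ alphaExpansion α d := Summable.le_tsum hsum 0 fun i _ => hnn i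
    have h1 : (0:ℝ) < (α - 1) ^ 0 * α ^ (-((∑ j ∈ Finset.range (0 + 1), d j : ℕ) : ℤ)) := by
      rw [pow_zero, one_mul]
      exact zpow_pos hα0 _
    linarith
  · have hr0 : (0:ℝ) ≤ (α - 1) / α := div_nonneg (by linarith) hα0.le
    have hr1 : (α - 1) / α < 1 := (div_lt_one hα0).2 (by linarith)
    have h2 : alphaExpansion α d ≤ ∑' i : ℕ, ((α - 1) / α) ^ i * α⁻¹ :=
      Summable.tsum_le_tsum (aexp_bound hα hd) hsum
        ((summable_geometric_of_lt_one hr0 hr1).mul_right α⁻¹)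
    have h3 : ∑' i : ℕ, ((α - 1) / α) ^ i * α⁻¹ = 1 := by
      rw [tsum_mul_right, tsum_geometric_of_lt_one hr0 hr1]
      have h4 : 1 - (α - 1) / α = α⁻¹ := by field_simp; ring
      rw [h4, inv_inv]
      exact mul_inv_cancel₀ (ne_of_gt hα0)
    linarith

lemma aexp_rec (hα : 1 < α) (hd : ∀ i, 1 ≤ d i) :
    alphaExpansion α d
      = α ^ (-(d 0 : ℤ)) * (1 + (α - 1) * alphaExpansion α (fun i => d (i + 1))) := by
  have hα0 : (0:ℝ) < α := lt_trans zero_lt_one hα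
  have hsum := summable_aexp hα hd
  have hE : alphaExpansion α (fun i => d (i + 1))
      = ∑' i : ℕ, (α - 1) ^ i * α ^ (-((∑ j ∈ Finset.range (i + 1), d (j + 1) : ℕ) : ℤ)) := by
    simp only [alphaExpansion]
  have hterm : ∀ i : ℕ,
      (α - 1) ^ (i + 1) * α ^ (-((∑ j ∈ Finset.range (i + 1 + 1), d j : ℕ) : ℤ))
        = ((α - 1) * α ^ (-(d 0 : ℤ)))
          * ((α - 1) ^ i * α ^ (-((∑ j ∈ Finset.range (i + 1), d (j + 1) : ℕ) : ℤ))) := by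
    intro i
    have hsplit : ∑ j ∈ Finset.range (i + 1 + 1), d j
        = (∑ j ∈ Finset.range (i + 1), d (j + 1)) + d 0 := Finset.sum_range_succ' d (i + 1)
    rw [hsplit]
    have hcast : (-(((∑ j ∈ Finset.range (i + 1), d (j + 1)) + d 0 : ℕ) : ℤ))
        = (-((∑ j ∈ Finset.range (i + 1), d (j + 1) : ℕ) : ℤ)) + (-(d 0 : ℤ)) := by
      push_cast
      ring
    rw [hcast, zpow_add₀ (ne_of_gt hα0), pow_succ]
    ring
  rw [alphaExpansion, Summable.tsum_eq_zero_add hsum]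
  rw [tsum_congr hterm, tsum_mul_left, ← hE]
  rw [pow_zero, one_mul, Finset.sum_range_one]
  ring

lemma aexp_mem_aSe (hα : 1 < α) (hd : ∀ i, 1 ≤ d i) :
    alphaExpansion α d ∈ aSe α (d 0) := by
  obtain ⟨hy0, hy1⟩ := aexp_mem hα (d := fun i => d (i + 1)) (fun i => hd (i + 1))
  have hrec := aexp_rec hα hd
  have hp : (0:ℝ) < α ^ (-(d 0 : ℤ)) := zpow_pos (lt_trans zero_lt_one hα) _
  set E := alphaExpansion α (fun i => d (i + 1)) with hE
  constructor
  · rw [hrec]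
    calc α ^ (-(d 0 : ℤ)) = α ^ (-(d 0 : ℤ)) * 1 := (mul_one _).symm
      _ < α ^ (-(d 0 : ℤ)) * (1 + (α - 1) * E) := by
          apply mul_lt_mul_of_pos_left _ hp
          nlinarith
  · rw [hrec]
    have h1 : (α - 1) * E ≤ (α - 1) * 1 := mul_le_mul_of_nonneg_left hy1 (by linarith)
    exact mul_le_mul_of_nonneg_left (by linarith) hp.le

lemma aexp_amap (hα : 1 < α) (hd : ∀ i, 1 ≤ d i) :
    amap α (alphaExpansion α d) = alphaExpansion α (fun i => d (i + 1)) := by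
  have hα0 : (0:ℝ) < α := lt_trans zero_lt_one hα
  have hde : adig α (alphaExpansion α d) = d 0 :=
    adig_eq_of_mem hα (hd 0) (aexp_mem_aSe hα hd)
  have hinv : α ^ (-(d 0 : ℤ)) * α ^ (d 0 : ℕ) = 1 := by
    rw [← zpow_natCast α (d 0), ← zpow_add₀ (ne_of_gt hα0)]
    simp
  set E := alphaExpansion α (fun i => d (i + 1)) with hE
  simp only [amap, hde]
  rw [aexp_rec hα hd, ← hE]
  have hx : α ^ (-(d 0 : ℤ)) * (1 + (α - 1) * E) * α ^ (d 0) = 1 + (α - 1) * E := by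
    rw [mul_right_comm, hinv, one_mul]
  rw [hx, add_sub_cancel_left, mul_div_cancel_left₀ _ (ne_of_gt (by linarith : (0:ℝ) < α - 1))]

lemma aexp_digits (hα : 1 < α) (hd : ∀ i, 1 ≤ d i) (j : ℕ) :
    d j = adseq α j (alphaExpansion α d) := by
  induction j generalizing d with
  | zero =>
    exact (adig_eq_of_mem hα (hd 0) (aexp_mem_aSe hα hd)).symm
  | succ j ih =>
    have hstep : adseq α (j + 1) (alphaExpansion α d)
        = adseq α j (amap α (alphaExpansion α d)) := by
      simp only [adseq, Function.iterate_succ_apply]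
    rw [hstep, aexp_amap hα hd]
    exact ih (fun i => hd (i + 1))

end Expansion

theorem digit_frequency_ae_geometric (α : ℝ) (hα : 1 < α) :
    ∀ᵐ x ∂(volume.restrict (Set.Ioc (0 : ℝ) 1)),
      ∀ d : ℕ → ℕ, (∀ i, 1 ≤ d i) → alphaExpansion α d = x →
        ∀ e : ℕ, 1 ≤ e →
          Tendsto
            (fun n : ℕ =>
              (((Finset.range n).filter (fun j => d j = e)).card : ℝ) / n)
            atTop (nhds ((α - 1) / α ^ e)) := by
  classical
  set μ := volume.restrict (Set.Ioc (0 : ℝ) 1) with hμ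
  have hprob : IsProbabilityMeasure μ := isProbability_restrict
  have hae : ∀ᵐ x ∂μ, ∀ e : ℕ, 1 ≤ e →
      Tendsto (fun n : ℕ =>
          (((Finset.range n).filter (fun j => adseq α j x = e)).card : ℝ) / n)
        atTop (nhds ((α - 1) / α ^ e)) := by
    rw [ae_all_iff]
    intro e
    rcases Nat.lt_or_ge e 1 with he | he
    · exact Filter.Eventually.of_forall fun x h1e => absurd h1e (by omega)
    set X : ℕ → ℝ → ℝ := fun j x => if adseq α j x = e then (1:ℝ) else 0 with hX
    have hφ : Measurable (fun k : ℕ => if k = e then (1:ℝ) else 0) := Measurable.of_discrete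
    have hX0 : X 0 = Set.indicator (adig α ⁻¹' {e}) (fun _ => (1:ℝ)) := by
      funext x
      simp [hX, Set.indicator_apply, adseq, Set.mem_preimage]
      congr
    have hmeasA : MeasurableSet (adig α ⁻¹' {e}) :=
      measurable_adig (α := α) (MeasurableSet.of_discrete (s := ({e} : Set ℕ)))
    have hint : Integrable (X 0) μ := by
      rw [hX0, integrable_indicator_iff hmeasA]
      exact integrableOn_const (measure_lt_top μ _).ne
    have hindep : Pairwise (Function.onFun (ProbabilityTheory.IndepFun · · μ) X) := by
      intro i j hij
      exact ProbabilityTheory.IndepFun.comp (indepFun_adseq hα hij) hφ hφ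
    have hident : ∀ j, ProbabilityTheory.IdentDistrib (X j) (X 0) μ μ := fun j =>
      ProbabilityTheory.IdentDistrib.comp (identDistrib_adseq hα j) hφ
    have hslln := ProbabilityTheory.strong_law_ae_real X hint hindep hident
    have hintegral : ∫ x, X 0 x ∂μ = (α - 1) / α ^ e := by
      rw [hX0, integral_indicator_const _ hmeasA, measureReal_def, meas_adig_singleton hα he, smul_eq_mul,
        mul_one, ENNReal.toReal_ofReal
          (mul_nonneg (by linarith) (zpow_pos (by linarith : (0:ℝ) < α) _).le),
        zpow_neg, zpow_natCast, div_eq_mul_inv]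
    rw [hintegral] at hslln
    filter_upwards [hslln] with x hx
    intro _
    have hfun : (fun n : ℕ =>
          (((Finset.range n).filter (fun j => adseq α j x = e)).card : ℝ) / n)
        = fun n : ℕ => (∑ i ∈ Finset.range n, X i x) / n := by
      funext n
      rw [Finset.sum_boole]
    rw [hfun]
    exact hx
  filter_upwards [hae] with x hx d hd hval e he
  have hdig : ∀ j, d j = adseq α j x := by
    intro j
    rw [← hval]
    exact aexp_digits hα hd j
  have hfilter : ∀ n, (Finset.range n).filter (fun j => d j = e)
      = (Finset.range n).filter (fun j => adseq α j x = e) := by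
    intro n
    apply Finset.filter_congr
    intro j _
    rw [hdig j]
  have h2 := hx e he
  refine h2.congr fun n => ?_
  rw [hfilter n]
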